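/- Let G be a finite prereduced graph and let H₁ and H₂ be congenial holes of G. Then the set of common neighbors of H₁ equals the set of common neighbors of H₂, and moreover no vertex of H₁ is a common neighbor of H₂ and no vertex of H₂ is a common neighbor of H₁. -/

import Mathlib

/-- A graph is an interval graph if each vertex can be assigned a (nonempty) closed real
interval such that two distinct vertices are adjacent iff their intervals intersect. -/
def IsIntervalGraph {V : Type*} (G : SimpleGraph V) : Prop :=
  ∃ f : V → Set ℝ,
    (∀ v, ∃ a b : ℝ, a ≤ b ∧ f v = Set.Icc a b) ∧
    ∀ u v : V, u ≠ v → (G.Adj u v ↔ (f u ∩ f v).Nonempty)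

/-- A hole is an induced (chordless) cycle on at least 4 vertices, identified
with its vertex set. -/
def IsHole {V : Type*} (G : SimpleGraph V) (H : Set V) : Prop :=
  ∃ m : ℕ, 4 ≤ m ∧ ∃ f : ZMod m → V,
    Function.Injective f ∧ Set.range f = H ∧
      ∀ i j : ZMod m, G.Adj (f i) (f j) ↔ (j = i + 1 ∨ i = j + 1)

/-- A minimal forbidden set: the induced subgraph is not interval, but every
proper subset induces an interval graph. -/
def IsMinimalForbidden {V : Type*} (G : SimpleGraph V) (X : Set V) : Prop :=
  ¬ IsIntervalGraph (G.induce X) ∧ ∀ Y : Set V, Y ⊂ X → IsIntervalGraph (G.induce Y)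

/-- A graph is prereduced if it has no minimal forbidden set of at most 10 vertices. -/
def Prereduced {V : Type*} (G : SimpleGraph V) : Prop :=
  ∀ X : Set V, X.ncard ≤ 10 → ¬ IsMinimalForbidden G X

/-- A module: any two vertices of `M` have exactly the same neighbors outside `M`. -/
def IsGraphModule {V : Type*} (G : SimpleGraph V) (M : Set V) : Prop :=
  ∀ u ∈ M, ∀ v ∈ M, ∀ x ∉ M, (G.Adj u x ↔ G.Adj v x)

/-- A graph is reduced if it is prereduced and every nontrivial module induces a clique. -/
def Reduced {V : Type*} [Fintype V] (G : SimpleGraph V) : Prop :=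
  Prereduced G ∧
    ∀ M : Set V, IsGraphModule G M → 1 < M.ncard → M.ncard < Fintype.card V →
      G.IsClique M

/-- Closed neighborhood `N[v]`. -/
def closedNbhd {V : Type*} (G : SimpleGraph V) (v : V) : Set V :=
  insert v (G.neighborSet v)

/-- Closed neighborhood of a set, `N[U] = ⋃ v ∈ U, N[v]`. -/
def closedNbhdSet {V : Type*} (G : SimpleGraph V) (U : Set V) : Set V :=
  ⋃ v ∈ U, closedNbhd G v

/-- The set of common neighbors of a vertex set `X`. -/
def commonNbrs {V : Type*} (G : SimpleGraph V) (X : Set V) : Set V :=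
  {v | ∀ x ∈ X, G.Adj v x}

/-- `P` induces a chordless path: it can be enumerated so that adjacency holds
exactly between consecutive vertices. -/
def IsInducedPath {V : Type*} (G : SimpleGraph V) (P : Set V) : Prop :=
  ∃ n : ℕ, ∃ f : Fin (n + 1) → V, Function.Injective f ∧ Set.range f = P ∧
    ∀ i j : Fin (n + 1), G.Adj (f i) (f j) ↔ (i.val + 1 = j.val ∨ j.val + 1 = i.val)

/-- A shallow terminal: a vertex `s` contained in a minimal forbidden set `W` that is
not a hole, such that `W \ N[s]` induces a chordless path. -/
def ShallowTerminal {V : Type*} (G : SimpleGraph V) (s : V) : Prop :=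
  ∃ W : Set V, IsMinimalForbidden G W ∧ s ∈ W ∧ ¬ IsHole G W ∧
    IsInducedPath G (W \ closedNbhd G s)

/-- A hole cover: a vertex set intersecting every hole. -/
def HoleCover {V : Type*} (G : SimpleGraph V) (C : Set V) : Prop :=
  ∀ H : Set V, IsHole G H → (C ∩ H).Nonempty

/-- A minimal hole cover: a hole cover no proper subset of which is a hole cover. -/
def MinimalHoleCover {V : Type*} (G : SimpleGraph V) (C : Set V) : Prop :=
  HoleCover G C ∧ ∀ C' : Set V, C' ⊂ C → ¬ HoleCover G C'

/-- An interval deletion set: a vertex set whose removal leaves an interval graph. -/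
def IntervalDeletionSet {V : Type*} (G : SimpleGraph V) (Q : Set V) : Prop :=
  IsIntervalGraph (G.induce Qᶜ)

/-- A minimum interval deletion set. -/
def MinIntervalDeletionSet {V : Type*} (G : SimpleGraph V) (Q : Set V) : Prop :=
  IntervalDeletionSet G Q ∧
    ∀ Q' : Set V, IntervalDeletionSet G Q' → Q.ncard ≤ Q'.ncard

/-- Two holes are congenial if each is contained in the closed neighborhood of the other. -/
def Congenial {V : Type*} (G : SimpleGraph V) (H₁ H₂ : Set V) : Prop :=
  H₁ ⊆ closedNbhdSet G H₂ ∧ H₂ ⊆ closedNbhdSet G H₁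

/-- The graph `G − S`: edges of `G` with both endpoints outside `S`
(vertices of `S` become isolated). -/
def deleteSet {V : Type*} (G : SimpleGraph V) (S : Set V) : SimpleGraph V where
  Adj u v := G.Adj u v ∧ u ∉ S ∧ v ∉ S
  symm := ⟨fun u v h => ⟨h.1.symm, h.2.2, h.2.1⟩⟩
  loopless := ⟨fun v h => G.loopless.irrefl v h.1⟩

-- ===== auxiliary lemmas =====

/-- Any set inducing a non-interval graph contains a minimal forbidden set. -/
lemma exists_minimal_forbidden {V : Type*} [Fintype V] (G : SimpleGraph V) :
    ∀ n : ℕ, ∀ X : Set V, X.ncard = n → ¬ IsIntervalGraph (G.induce X) →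
      ∃ Y ⊆ X, IsMinimalForbidden G Y := by
  intro n
  induction n using Nat.strong_induction_on with
  | _ n ih =>
    intro X hn hX
    by_cases h : ∀ Y : Set V, Y ⊂ X → IsIntervalGraph (G.induce Y)
    · exact ⟨X, subset_rfl, hX, h⟩
    · push_neg at h
      obtain ⟨Z, hZX, hZ⟩ := h
      obtain ⟨Y, hYZ, hY⟩ := ih Z.ncard (hn ▸ Set.ncard_lt_ncard hZX (Set.toFinite X)) Z rfl hZ
      exact ⟨Y, hYZ.trans hZX.subset, hY⟩

lemma prereduced_small {V : Type*} [Fintype V] {G : SimpleGraph V} (hG : Prereduced G)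
    (X : Set V) (hX : X.ncard ≤ 10) : IsIntervalGraph (G.induce X) := by
  by_contra hni
  obtain ⟨Y, hYX, hY⟩ := exists_minimal_forbidden G X.ncard X rfl hni
  exact hG Y (le_trans (Set.ncard_le_ncard hYX (Set.toFinite X)) hX) hY

lemma zmod_small_ne_zero (m : ℕ) (c : ℤ) (h0 : c ≠ 0) (hc : c.natAbs < m) :
    ((c : ZMod m)) ≠ 0 := by
  haveI : NeZero m := ⟨by omega⟩
  intro h
  have h1 : (m : ℤ) ∣ c := (ZMod.intCast_zmod_eq_zero_iff_dvd c m).mp h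
  have h2 : (m : ℤ) ∣ (c.natAbs : ℤ) := (Int.dvd_natAbs).mpr h1
  have h3 : m ∣ c.natAbs := Int.natCast_dvd_natCast.mp h2
  have h4 : m ≤ c.natAbs := Nat.le_of_dvd (by omega) h3
  omega

/-- Purely real-arithmetic core of the 7-vertex obstruction, under the
orientation assumption `b3 < a5`. -/
lemma core_real (a2 b2 a3 b3 a4 b4 a5 b5 a6 b6 av bv ay byy p q t u x z w : ℝ)
    (hp : a4 ≤ p ∧ p ≤ b4 ∧ a3 ≤ p ∧ p ≤ b3)
    (hq : a4 ≤ q ∧ q ≤ b4 ∧ a5 ≤ q ∧ q ≤ b5)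
    (ht : a2 ≤ t ∧ t ≤ b2 ∧ a3 ≤ t ∧ t ≤ b3)
    (hu : a6 ≤ u ∧ u ≤ b6 ∧ a5 ≤ u ∧ u ≤ b5)
    (hx : av ≤ x ∧ x ≤ bv ∧ a2 ≤ x ∧ x ≤ b2)
    (hz : av ≤ z ∧ z ≤ bv ∧ a6 ≤ z ∧ z ≤ b6)
    (hw : ay ≤ w ∧ w ≤ byy ∧ a4 ≤ w ∧ w ≤ b4)
    (hord : b3 < a5)
    (hd1 : ∀ r : ℝ, a2 ≤ r → r ≤ b2 → a4 ≤ r → r ≤ b4 → False)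
    (hd2 : ∀ r : ℝ, a6 ≤ r → r ≤ b6 → a4 ≤ r → r ≤ b4 → False)
    (hdy : ∀ r : ℝ, ay ≤ r → r ≤ byy → av ≤ r → r ≤ bv → False) : False := by
  obtain ⟨hp1, hp2, hp3, hp4⟩ := hp
  obtain ⟨hq1, hq2, hq3, hq4⟩ := hq
  obtain ⟨ht1, ht2, ht3, ht4⟩ := ht
  obtain ⟨hu1, hu2, hu3, hu4⟩ := hu
  obtain ⟨hx1, hx2, hx3, hx4⟩ := hx
  obtain ⟨hz1, hz2, hz3, hz4⟩ := hz
  obtain ⟨hw1, hw2, hw3, hw4⟩ := hw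
  have hxa4 : x < a4 := by
    by_contra hcon
    push_neg at hcon
    rcases le_or_gt x b4 with h | h
    · exact hd1 x hx3 hx4 hcon h
    · exact hd1 b4 (by linarith) (by linarith) (by linarith) le_rfl
  have hzb4 : b4 < z := by
    by_contra hcon
    push_neg at hcon
    rcases le_or_gt a4 z with h | h
    · exact hd2 z hz3 hz4 h hcon
    · exact hd2 a4 (by linarith) (by linarith) le_rfl (by linarith)
  exact hdy w hw1 hw2 (by linarith) (by linarith)

/-- The 7-vertex configuration: an induced path r2–r1–b–s1–s2, a vertex v adjacent
to both ends r2 and s2, and a vertex y adjacent to b but not to v, is not possible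
in a graph all of whose ≤10-sets induce interval graphs. -/
lemma config_false {V : Type*} [Fintype V] {G : SimpleGraph V}
    (hsmall : ∀ X : Set V, X.ncard ≤ 10 → IsIntervalGraph (G.induce X))
    (v y r2 r1 b s1 s2 : V)
    (ar2r1 : G.Adj r2 r1) (ar1b : G.Adj r1 b) (abs1 : G.Adj b s1) (as1s2 : G.Adj s1 s2)
    (avr2 : G.Adj v r2) (avs2 : G.Adj v s2) (ayb : G.Adj y b)
    (nr1s1 : ¬ G.Adj r1 s1) (nr2b : ¬ G.Adj r2 b) (nbs2 : ¬ G.Adj b s2) (nvy : ¬ G.Adj v y)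
    (hr1s1 : r1 ≠ s1) (hr2b : r2 ≠ b) (hbs2 : b ≠ s2) (hvy : v ≠ y) : False := by
  classical
  set X : Set V := {v, y, r2, r1, b, s1, s2} with hXdef
  have hcard : X.ncard ≤ 10 := by
    have h1 := Set.ncard_insert_le v ({y, r2, r1, b, s1, s2} : Set V)
    have h2 := Set.ncard_insert_le y ({r2, r1, b, s1, s2} : Set V)
    have h3 := Set.ncard_insert_le r2 ({r1, b, s1, s2} : Set V)
    have h4 := Set.ncard_insert_le r1 ({b, s1, s2} : Set V)
    have h5 := Set.ncard_insert_le b ({s1, s2} : Set V)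
    have h6 := Set.ncard_insert_le s1 ({s2} : Set V)
    have h7 : ({s2} : Set V).ncard = 1 := Set.ncard_singleton s2
    rw [hXdef]
    omega
  obtain ⟨g, hIcc, hiff⟩ := hsmall X hcard
  choose A B hAB hEq using hIcc
  have memv : v ∈ X := by simp [hXdef]
  have memy : y ∈ X := by simp [hXdef]
  have memr2 : r2 ∈ X := by simp [hXdef]
  have memr1 : r1 ∈ X := by simp [hXdef]
  have memb : b ∈ X := by simp [hXdef]
  have mems1 : s1 ∈ X := by simp [hXdef]
  have mems2 : s2 ∈ X := by simp [hXdef]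
  have key : ∀ (x₁ x₂ : V) (h₁ : x₁ ∈ X) (h₂ : x₂ ∈ X), x₁ ≠ x₂ →
      (G.Adj x₁ x₂ ↔ (Set.Icc (A ⟨x₁, h₁⟩) (B ⟨x₁, h₁⟩) ∩
        Set.Icc (A ⟨x₂, h₂⟩) (B ⟨x₂, h₂⟩)).Nonempty) := by
    intro x₁ x₂ h₁ h₂ hne
    rw [← hEq ⟨x₁, h₁⟩, ← hEq ⟨x₂, h₂⟩]
    have := hiff ⟨x₁, h₁⟩ ⟨x₂, h₂⟩ (by simpa [Subtype.ext_iff] using hne)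
    simpa using this
  -- intersection points
  obtain ⟨p, hp1, hp2⟩ := (key b r1 memb memr1 ar1b.symm.ne).mp ar1b.symm
  obtain ⟨q, hq1, hq2⟩ := (key b s1 memb mems1 abs1.ne).mp abs1
  obtain ⟨t, ht1, ht2⟩ := (key r2 r1 memr2 memr1 ar2r1.ne).mp ar2r1
  obtain ⟨u, hu1, hu2⟩ := (key s2 s1 mems2 mems1 as1s2.symm.ne).mp as1s2.symm
  obtain ⟨x, hx1, hx2⟩ := (key v r2 memv memr2 avr2.ne).mp avr2
  obtain ⟨z, hz1, hz2⟩ := (key v s2 memv mems2 avs2.ne).mp avs2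
  obtain ⟨w, hw1, hw2⟩ := (key y b memy memb ayb.ne).mp ayb
  simp only [Set.mem_Icc] at hp1 hp2 hq1 hq2 ht1 ht2 hu1 hu2 hx1 hx2 hz1 hz2 hw1 hw2
  -- disjointness facts
  have dr1s1 : ∀ r : ℝ, A ⟨r1, memr1⟩ ≤ r → r ≤ B ⟨r1, memr1⟩ →
      A ⟨s1, mems1⟩ ≤ r → r ≤ B ⟨s1, mems1⟩ → False := by
    intro r hh1 hh2 hh3 hh4
    exact nr1s1 ((key r1 s1 memr1 mems1 hr1s1).mpr ⟨r, Set.mem_inter ⟨hh1, hh2⟩ ⟨hh3, hh4⟩⟩)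
  have dr2b : ∀ r : ℝ, A ⟨r2, memr2⟩ ≤ r → r ≤ B ⟨r2, memr2⟩ →
      A ⟨b, memb⟩ ≤ r → r ≤ B ⟨b, memb⟩ → False := by
    intro r hh1 hh2 hh3 hh4
    exact nr2b ((key r2 b memr2 memb hr2b).mpr ⟨r, Set.mem_inter ⟨hh1, hh2⟩ ⟨hh3, hh4⟩⟩)
  have dbs2 : ∀ r : ℝ, A ⟨s2, mems2⟩ ≤ r → r ≤ B ⟨s2, mems2⟩ →
      A ⟨b, memb⟩ ≤ r → r ≤ B ⟨b, memb⟩ → False := by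
    intro r hh1 hh2 hh3 hh4
    exact nbs2 ((key b s2 memb mems2 hbs2).mpr ⟨r, Set.mem_inter ⟨hh3, hh4⟩ ⟨hh1, hh2⟩⟩)
  have dvy : ∀ r : ℝ, A ⟨y, memy⟩ ≤ r → r ≤ B ⟨y, memy⟩ →
      A ⟨v, memv⟩ ≤ r → r ≤ B ⟨v, memv⟩ → False := by
    intro r hh1 hh2 hh3 hh4
    exact nvy ((key v y memv memy hvy).mpr ⟨r, Set.mem_inter ⟨hh3, hh4⟩ ⟨hh1, hh2⟩⟩)
  -- orientation case split
  rcases le_or_gt (A ⟨s1, mems1⟩) (B ⟨r1, memr1⟩) with hord | hord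
  · -- then B s1 < A r1 must fail unless disjointness violated; get b5 < a3
    rcases le_or_gt (A ⟨r1, memr1⟩) (B ⟨s1, mems1⟩) with hord2 | hord2
    · -- both overlap: common point max
      exact dr1s1 (max (A ⟨r1, memr1⟩) (A ⟨s1, mems1⟩)) (le_max_left _ _)
        (by rcases max_cases (A ⟨r1, memr1⟩) (A ⟨s1, mems1⟩) with ⟨hm, _⟩ | ⟨hm, _⟩ <;>
            rw [hm] <;> [exact hp2.1.trans hp2.2; linarith [hq2.1, hq2.2]])
        (le_max_right _ _)
        (by rcases max_cases (A ⟨r1, memr1⟩) (A ⟨s1, mems1⟩) with ⟨hm, _⟩ | ⟨hm, _⟩ <;>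
            rw [hm] <;> [linarith [hp2.1, hp2.2]; exact hq2.1.trans hq2.2])
    · -- B s1 < A r1 : mirrored orientation (swap r↔s)
      exact core_real _ _ _ _ _ _ _ _ _ _ _ _ _ _ q p u t z x w
        ⟨hq1.1, hq1.2, hq2.1, hq2.2⟩ ⟨hp1.1, hp1.2, hp2.1, hp2.2⟩
        ⟨hu1.1, hu1.2, hu2.1, hu2.2⟩ ⟨ht1.1, ht1.2, ht2.1, ht2.2⟩
        ⟨hz1.1, hz1.2, hz2.1, hz2.2⟩ ⟨hx1.1, hx1.2, hx2.1, hx2.2⟩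
        ⟨hw1.1, hw1.2, hw2.1, hw2.2⟩ hord2 dbs2 dr2b dvy
  · -- B r1 < A s1 : standard orientation
    exact core_real _ _ _ _ _ _ _ _ _ _ _ _ _ _ p q t u x z w
      ⟨hp1.1, hp1.2, hp2.1, hp2.2⟩ ⟨hq1.1, hq1.2, hq2.1, hq2.2⟩
      ⟨ht1.1, ht1.2, ht2.1, ht2.2⟩ ⟨hu1.1, hu1.2, hu2.1, hu2.2⟩
      ⟨hx1.1, hx1.2, hx2.1, hx2.2⟩ ⟨hz1.1, hz1.2, hz2.1, hz2.2⟩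
      ⟨hw1.1, hw1.2, hw2.1, hw2.2⟩ hord dr2b dbs2 dvy

/-- If `v` is adjacent to every vertex of a hole (given by `f`) and `y ∉ hole` has a
neighbor on the hole, with `y ≠ v` nonadjacent to `v`, we get a contradiction. -/
lemma pendant_false {V : Type*} [Fintype V] {G : SimpleGraph V} (hG : Prereduced G)
    {m : ℕ} (hm : 4 ≤ m) (f : ZMod m → V) (hinj : Function.Injective f)
    (hadj : ∀ i j, G.Adj (f i) (f j) ↔ (j = i + 1 ∨ i = j + 1))
    (v y : V) (hvH : v ∉ Set.range f) (hyH : y ∉ Set.range f) (hvy : v ≠ y)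
    (hnadj : ¬ G.Adj v y) (huniv : ∀ j, G.Adj v (f j))
    (k : ZMod m) (hyk : G.Adj y (f k)) : False := by
  have h1 : (1 : ZMod m) ≠ 0 := by
    have h := zmod_small_ne_zero m 1 (by norm_num) (by simp [Int.natAbs_one]; omega)
    simpa using h
  have h2 : (2 : ZMod m) ≠ 0 := by
    have h := zmod_small_ne_zero m 2 (by norm_num) (by simp; omega)
    simpa using h
  have h3 : (3 : ZMod m) ≠ 0 := by
    have h := zmod_small_ne_zero m 3 (by norm_num) (by simp; omega)
    simpa using h
  have ar2r1 : G.Adj (f (k-2)) (f (k-1)) := (hadj _ _).mpr (Or.inl (by ring))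
  have ar1b : G.Adj (f (k-1)) (f k) := (hadj _ _).mpr (Or.inl (by ring))
  have abs1 : G.Adj (f k) (f (k+1)) := (hadj _ _).mpr (Or.inl (by ring))
  have as1s2 : G.Adj (f (k+1)) (f (k+2)) := (hadj _ _).mpr (Or.inl (by ring))
  have nr1s1 : ¬ G.Adj (f (k-1)) (f (k+1)) := by
    rw [hadj]
    rintro (h | h)
    · exact h1 (by linear_combination h)
    · exact h3 (by linear_combination -h)
  have nr2b : ¬ G.Adj (f (k-2)) (f k) := by
    rw [hadj]
    rintro (h | h)
    · exact h1 (by linear_combination h)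
    · exact h3 (by linear_combination -h)
  have nbs2 : ¬ G.Adj (f k) (f (k+2)) := by
    rw [hadj]
    rintro (h | h)
    · exact h1 (by linear_combination h)
    · exact h3 (by linear_combination -h)
  have hr1s1 : f (k-1) ≠ f (k+1) := fun h => h2 (by linear_combination -(hinj h))
  have hr2b : f (k-2) ≠ f k := fun h => h2 (by linear_combination -(hinj h))
  have hbs2 : f k ≠ f (k+2) := fun h => h2 (by linear_combination -(hinj h))
  exact config_false (prereduced_small hG) v y _ _ _ _ _ ar2r1 ar1b abs1 as1s2
    (huniv _) (huniv _) hyk nr1s1 nr2b nbs2 hnadj hr1s1 hr2b hbs2 hvy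

/-- No vertex of H₁ \ H₂ can be adjacent to all of H₂ (for congenial-type holes). -/
lemma claim1 {V : Type*} [Fintype V] {G : SimpleGraph V} (hG : Prereduced G)
    {H₁ H₂ : Set V} (h1 : IsHole G H₁) (h2 : IsHole G H₂)
    (hsub : H₁ ⊆ closedNbhdSet G H₂)
    (v : V) (hv1 : v ∈ H₁) (hv2 : v ∉ H₂) (huniv : ∀ x ∈ H₂, G.Adj v x) : False := by
  obtain ⟨m1, hm1, f1, hinj1, hrange1, hadj1⟩ := h1
  obtain ⟨m2, hm2, f2, hinj2, hrange2, hadj2⟩ := h2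
  have h1' : (1 : ZMod m1) ≠ 0 := by
    have h := zmod_small_ne_zero m1 1 (by norm_num) (by simp [Int.natAbs_one]; omega)
    simpa using h
  have h2' : (2 : ZMod m1) ≠ 0 := by
    have h := zmod_small_ne_zero m1 2 (by norm_num) (by simp; omega)
    simpa using h
  have h3' : (3 : ZMod m1) ≠ 0 := by
    have h := zmod_small_ne_zero m1 3 (by norm_num) (by simp; omega)
    simpa using h
  rw [← hrange1] at hv1
  obtain ⟨k, rfl⟩ := hv1
  have hdH1 : f1 (k+2) ∈ H₁ := hrange1 ▸ Set.mem_range_self _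
  have hdnv : ¬ G.Adj (f1 k) (f1 (k+2)) := by
    rw [hadj1]
    rintro (h | h)
    · exact h1' (by linear_combination h)
    · exact h3' (by linear_combination -h)
  have hdne : f1 k ≠ f1 (k+2) := fun h => h2' (by linear_combination -(hinj1 h))
  have hdH2 : f1 (k+2) ∉ H₂ := fun hmem => hdnv (huniv _ hmem)
  have hmem := hsub hdH1
  simp only [closedNbhdSet, closedNbhd, Set.mem_iUnion, Set.mem_insert_iff,
    SimpleGraph.mem_neighborSet] at hmem
  obtain ⟨x, hxH2, hx⟩ := hmem
  rcases hx with heq | hadjx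
  · exact hdH2 (heq ▸ hxH2)
  · rw [← hrange2] at hxH2
    obtain ⟨k₂, rfl⟩ := hxH2
    refine pendant_false hG hm2 f2 hinj2 hadj2 (f1 k) (f1 (k+2)) ?_ ?_ hdne hdnv
      (fun j => huniv _ (hrange2 ▸ Set.mem_range_self j)) k₂ hadjx.symm
    · rw [hrange2]; exact hv2
    · rw [hrange2]; exact hdH2

lemma common_subset {V : Type*} [Fintype V] {G : SimpleGraph V} (hG : Prereduced G)
    {H₁ H₂ : Set V} (h1 : IsHole G H₁) (h2 : IsHole G H₂)
    (hcong : Congenial G H₁ H₂) : commonNbrs G H₁ ⊆ commonNbrs G H₂ := by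
  intro v hv
  simp only [commonNbrs, Set.mem_setOf_eq] at hv ⊢
  have hv1 : v ∉ H₁ := fun h => G.loopless.irrefl v (hv v h)
  have hv2 : v ∉ H₂ := fun h => claim1 hG h2 h1 hcong.2 v h hv1 hv
  intro y hy
  by_contra hnadj
  have hyH1 : y ∉ H₁ := fun h => hnadj (hv y h)
  have hyne : v ≠ y := fun h => hv2 (h ▸ hy)
  have hmem := hcong.2 hy
  simp only [closedNbhdSet, closedNbhd, Set.mem_iUnion, Set.mem_insert_iff,
    SimpleGraph.mem_neighborSet] at hmem
  obtain ⟨x, hxH1, hx⟩ := hmem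
  rcases hx with heq | hadjx
  · exact hyH1 (heq ▸ hxH1)
  · obtain ⟨m1, hm1, f1, hinj1, hrange1, hadj1⟩ := h1
    rw [← hrange1] at hxH1
    obtain ⟨k, rfl⟩ := hxH1
    refine pendant_false hG hm1 f1 hinj1 hadj1 v y ?_ ?_ hyne hnadj
      (fun j => hv _ (hrange1 ▸ Set.mem_range_self j)) k hadjx.symm
    · rw [hrange1]; exact hv1
    · rw [hrange1]; exact hyH1


/-- Congenial holes in a prereduced graph have the same common neighbors,
and no vertex of one is a common neighbor of the other. -/
theorem stmt_12 {V : Type*} [Fintype V] (G : SimpleGraph V) (hG : Prereduced G)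
    (H₁ H₂ : Set V) (h1 : IsHole G H₁) (h2 : IsHole G H₂)
    (hcong : Congenial G H₁ H₂) :
    commonNbrs G H₁ = commonNbrs G H₂ ∧
      (∀ v ∈ H₁, v ∉ commonNbrs G H₂) ∧ (∀ v ∈ H₂, v ∉ commonNbrs G H₁) := by
  refine ⟨Set.Subset.antisymm (common_subset hG h1 h2 hcong)
    (common_subset hG h2 h1 ⟨hcong.2, hcong.1⟩), ?_, ?_⟩
  · intro v hv1 hv2
    simp only [commonNbrs, Set.mem_setOf_eq] at hv2
    by_cases h : v ∈ H₂
    · exact G.loopless.irrefl v (hv2 v h)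
    · exact claim1 hG h1 h2 hcong.1 v hv1 h hv2
  · intro v hv2 hv1
    simp only [commonNbrs, Set.mem_setOf_eq] at hv1
    by_cases h : v ∈ H₁
    · exact G.loopless.irrefl v (hv1 v h)
    · exact claim1 hG h2 h1 hcong.2 v hv2 h hv1
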